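/- Let Q ⊆ ℂ be a nonempty compact convex set of diameter d, let ν be a finite positive Borel measure on ℂ supported in Q with total mass m := ν(Q) > 0, let b := (1/m)·∫_Q ζ dν(ζ) be its barycenter, let ζ' ∈ Q, and let z ∈ ℂ with r := dist(z, Q) > 0. Then |∫_Q log|z − ζ| dν(ζ) − m·log|z − ζ'|| ≤ m·|b − ζ'|/r + m·d²/r². -/

import Mathlib

open MeasureTheory Filter Topology

noncomputable section


lemma log_lb (s : ℝ) (hs : 0 ≤ s) : 2*s/(2+s) ≤ Real.log (1+s) := by
  set f : ℝ → ℝ := fun s => Real.log (1+s) - 2*s/(2+s) with hf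
  have key : ∀ x ∈ Set.Ioi (0:ℝ), HasDerivAt f (1/(1+x) - 4/(2+x)^2) x := by
    intro x hx
    have hx0 : (0:ℝ) < x := hx
    have h1 : HasDerivAt (fun s : ℝ => 1 + s) 1 x := (hasDerivAt_id x).const_add 1
    have hlog : HasDerivAt (fun s : ℝ => Real.log (1+s)) (1/(1+x)) x := by
      simpa using h1.log (by linarith)
    have hnum : HasDerivAt (fun s : ℝ => 2*s) 2 x := by
      simpa using (hasDerivAt_id x).const_mul 2
    have hden : HasDerivAt (fun s : ℝ => 2 + s) 1 x := (hasDerivAt_id x).const_add 2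
    have hdiv : HasDerivAt (fun s : ℝ => 2*s/(2+s)) ((2*(2+x) - 2*x*1)/(2+x)^2) x :=
      hnum.div hden (by linarith)
    have : (2*(2+x) - 2*x*1)/(2+x)^2 = 4/(2+x)^2 := by ring_nf
    rw [this] at hdiv
    exact hlog.sub hdiv
  have hmono : MonotoneOn f (Set.Ici 0) := by
    apply monotoneOn_of_deriv_nonneg (convex_Ici 0)
    · apply ContinuousOn.sub
      · apply ContinuousOn.log (by fun_prop)
        intro x hx; simp only [Set.mem_Ici] at hx; intro h; linarith
      · apply ContinuousOn.div (by fun_prop) (by fun_prop)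
        intro x hx; simp only [Set.mem_Ici] at hx; intro h; linarith
    · rw [interior_Ici]
      exact fun x hx => ((key x hx).differentiableAt).differentiableWithinAt
    · rw [interior_Ici]
      intro x hx
      rw [(key x hx).deriv]
      have hx0 : (0:ℝ) < x := hx
      rw [sub_nonneg, div_le_div_iff₀ (by positivity) (by positivity)]
      nlinarith [sq_nonneg x]
  have h0 : f 0 = 0 := by simp [hf]
  have := hmono (Set.mem_Ici.2 le_rfl) (Set.mem_Ici.2 hs) hs
  rw [h0] at this
  simp only [hf] at this
  linarith

lemma log_lb2 (s : ℝ) (h1 : -1 < s) (h2 : s ≤ 0) : s - Real.log (1+s) ≤ s^2/(2*(1+s)) := by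
  set g : ℝ → ℝ := fun s => s^2/(2*(1+s)) - s + Real.log (1+s) with hg
  have key : ∀ x ∈ Set.Ioo (-1:ℝ) 0, HasDerivAt g (x*(2+x)/(2*(1+x)^2) - 1 + 1/(1+x)) x := by
    intro x hx
    obtain ⟨hxa, hxb⟩ := hx
    have h1x : (0:ℝ) < 1 + x := by linarith
    have hnum : HasDerivAt (fun s : ℝ => s^2) (2*x) x := by
      simpa using (hasDerivAt_pow 2 x)
    have hden : HasDerivAt (fun s : ℝ => 2*(1+s)) 2 x := by
      simpa using ((hasDerivAt_id x).const_add 1).const_mul 2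
    have hdiv : HasDerivAt (fun s : ℝ => s^2/(2*(1+s)))
        ((2*x*(2*(1+x)) - x^2*2)/(2*(1+x))^2) x := hnum.div hden (by positivity)
    have heq : (2*x*(2*(1+x)) - x^2*2)/(2*(1+x))^2 = x*(2+x)/(2*(1+x)^2) := by
      rw [div_eq_div_iff (by positivity) (by positivity)]; ring
    rw [heq] at hdiv
    have hlog : HasDerivAt (fun s : ℝ => Real.log (1+s)) (1/(1+x)) x := by
      have := ((hasDerivAt_id x).const_add 1).log (x := x) (by simp; linarith)
      simpa using this
    exact (hdiv.sub (hasDerivAt_id x)).add hlog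
  have hanti : AntitoneOn g (Set.Ioc (-1) 0) := by
    apply antitoneOn_of_deriv_nonpos (convex_Ioc (-1) 0)
    · apply ContinuousOn.add
      · apply ContinuousOn.sub
        · apply ContinuousOn.div (by fun_prop) (by fun_prop)
          intro x hx; obtain ⟨ha, hb⟩ := hx
          have : (0:ℝ) < 1 + x := by linarith
          positivity
        · fun_prop
      · apply ContinuousOn.log (by fun_prop)
        intro x hx; obtain ⟨ha, hb⟩ := hx
        have : (0:ℝ) < 1 + x := by linarith
        positivity
    · rw [interior_Ioc]
      exact fun x hx => ((key x hx).differentiableAt).differentiableWithinAt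
    · rw [interior_Ioc]
      intro x hx
      rw [(key x hx).deriv]
      obtain ⟨hxa, hxb⟩ := hx
      have h1x : (0:ℝ) < 1 + x := by linarith
      have heq2 : x*(2+x)/(2*(1+x)^2) - 1 + 1/(1+x) = -(x^2/(2*(1+x)^2)) := by
        field_simp
        ring
      rw [heq2]
      have : (0:ℝ) ≤ x^2/(2*(1+x)^2) := by positivity
      linarith
  have h0 : g 0 = 0 := by simp [hg]
  have hmem : s ∈ Set.Ioc (-1:ℝ) 0 := ⟨h1, h2⟩
  have hmem0 : (0:ℝ) ∈ Set.Ioc (-1:ℝ) 0 := ⟨by norm_num, le_rfl⟩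
  have := hanti hmem hmem0 h2
  rw [h0] at this
  simp only [hg] at this
  linarith



lemma div_step (B E Qv s : ℝ) (hQ : 0 < Qv) (hB : 0 ≤ B) (hE : 0 ≤ E)
    (hiP : 1 ≤ (1+s)*Qv) (hs2 : s^2*Qv ≤ B*E) : s^2*2 ≤ B*E*(2*(1+s)) := by
  have c1 : (s^2*2)*Qv ≤ (B*E*(2*(1+s)))*Qv := by
    have e1 : (s^2*2)*Qv = 2*(s^2*Qv) := by ring
    have e2 : (B*E*(2*(1+s)))*Qv = (2*(B*E))*((1+s)*Qv) := by ring
    rw [e1, e2]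
    calc 2*(s^2*Qv) ≤ 2*(B*E) := by linarith
    _ = (2*(B*E))*1 := by ring
    _ ≤ (2*(B*E))*((1+s)*Qv) := by
        apply mul_le_mul_of_nonneg_left hiP (by positivity)
  exact le_of_mul_le_mul_right c1 hQ

set_option maxHeartbeats 1000000 in
lemma key_real (t a s v : ℝ) (ht : 0 ≤ t) (ha0 : 0 ≤ a) (hat : a ≤ t)
    (hrev : |v| ≤ a) (hseq : s = 2*v + a^2) (hP : 1/(1+t)^2 ≤ 1+s) :
    |(1/2) * Real.log (1+s) - v| ≤ t^2 := by
  have h1t : (0:ℝ) < 1 + t := by linarith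
  have hPpos : (0:ℝ) < (1+t)^2 := by positivity
  have hspos : (0:ℝ) < 1 + s := lt_of_lt_of_le (by positivity) hP
  have hat2 : a^2 ≤ t^2 := by nlinarith
  rw [abs_le]
  constructor
  · -- v - (1/2) log(1+s) ≤ t^2
    rw [neg_le, ← sub_nonneg]
    have hkey : 2*v - Real.log (1+s) ≤ 2*t^2 := by
      rcases le_or_gt 0 s with hcase | hcase
      · have hlb := log_lb s hcase
        have h1 : s - Real.log (1+s) ≤ s^2/(2+s) := by
          have he : s - 2*s/(2+s) = s^2/(2+s) := by field_simp; ring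
          linarith
        have hsle : s ≤ 2*a + a^2 := by
          have : v ≤ a := le_of_abs_le hrev
          rw [hseq]; linarith
        have h2 : s^2/(2+s) ≤ 2*t^2 + a^2 := by
          rw [div_le_iff₀ (by linarith)]
          nlinarith [mul_nonneg (sub_nonneg.2 hsle) hcase, mul_nonneg ha0 (sub_nonneg.2 hat),
            mul_nonneg (mul_nonneg ha0 ha0) (sub_nonneg.2 hat),
            mul_nonneg (mul_nonneg ht ht) hcase, mul_nonneg (mul_nonneg ha0 ht) ht,
            sq_nonneg (t - a), mul_nonneg hcase hcase]
        have h2v : 2*v = s - a^2 := by rw [hseq]; ring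
        linarith
      · have hs1 : -1 < s := by linarith
        have hlb := log_lb2 s hs1 hcase.le
        have hiP : 1 ≤ (1+s)*(1+t)^2 := (div_le_iff₀ hPpos).mp hP
        have hnegs : -s ≤ 2*a - a^2 := by
          have h' : -a ≤ v := neg_le_of_abs_le hrev
          rw [hseq]; linarith
        have hnegs0 : (0:ℝ) ≤ -s := by linarith
        have hb1 : (0:ℝ) ≤ 2*a - a^2 := le_trans hnegs0 hnegs
        have hnegs2 : (-s) * (1+t)^2 ≤ (1+t)^2 - 1 := by nlinarith [hiP]
        have hs2 : s^2 * (1+t)^2 ≤ (2*a - a^2)*((1+t)^2 - 1) := by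
          have h'' := mul_le_mul hnegs hnegs2 (by positivity) hb1
          nlinarith [h'']
        have hE : (0:ℝ) ≤ (1+t)^2 - 1 := by nlinarith
        have hgoal1 : s^2/(2*(1+s)) ≤ (2*a - a^2)*((1+t)^2 - 1)/2 := by
          rw [div_le_div_iff₀ (by linarith) (by norm_num)]
          exact div_step (2*a - a^2) ((1+t)^2 - 1) ((1+t)^2) s hPpos hb1 hE hiP hs2
        have hfin : (2*a - a^2)*((1+t)^2 - 1)/2 - a^2 ≤ 2*t^2 := by
          have hC2 : (0:ℝ) < 2*t+t^2+2 := by positivity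
          have hmain : (2*a - a^2)*(2*t+t^2) - 2*a^2 ≤ 4*t^2 := by
            nlinarith [sq_nonneg ((2*t+t^2+2)*a - (2*t+t^2)), hC2, mul_nonneg ht (sq_nonneg t),
              mul_nonneg (mul_nonneg ht ht) (sq_nonneg t)]
          have he : (1+t)^2 - 1 = 2*t+t^2 := by ring
          rw [he]
          linarith
        have h2v : 2*v = s - a^2 := by rw [hseq]; ring
        linarith
    linarith
  · have hub := Real.log_le_sub_one_of_pos hspos
    nlinarith [hrev, abs_nonneg v]

lemma key_pt (t : ℝ) (ht : 0 ≤ t) (u : ℂ) (hu : ‖u‖ ≤ t)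
    (h1u : 1/(1+t) ≤ ‖1+u‖) :
    |Real.log (‖1+u‖) - u.re| ≤ t^2 := by
  have h1t : (0:ℝ) < 1 + t := by linarith
  have habspos : (0:ℝ) < ‖1+u‖ := lt_of_lt_of_le (by positivity) h1u
  have habs : (‖1+u‖)^2 = 1 + (2*u.re + (‖u‖)^2) := by
    rw [Complex.sq_norm, Complex.normSq_add]
    simp [← Complex.sq_norm]
    ring
  have hlog2 : Real.log (1 + (2*u.re + (‖u‖)^2))
      = 2 * Real.log (‖1+u‖) := by
    rw [← habs, Real.log_pow]; push_cast; ring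
  have hP : 1/(1+t)^2 ≤ 1 + (2*u.re + (‖u‖)^2) := by
    rw [← habs]
    calc 1/(1+t)^2 = (1/(1+t))^2 := by rw [div_pow]; norm_num
    _ ≤ (‖1+u‖)^2 := by
        apply pow_le_pow_left₀ (by positivity) h1u
  have := key_real t (‖u‖) (2*u.re + (‖u‖)^2) u.re ht
    (norm_nonneg u) hu (Complex.abs_re_le_norm u) rfl hP
  rw [hlog2] at this
  have heq : (1/2:ℝ) * (2 * Real.log (‖1+u‖)) = Real.log (‖1+u‖) := by
    ring
  rw [heq] at this
  exact this

theorem statement9 (Q : Set ℂ) (hQne : Q.Nonempty) (hQc : IsCompact Q)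
    (hQconv : Convex ℝ Q)
    (ν : Measure ℂ) [IsFiniteMeasure ν] (hsupp : ν Qᶜ = 0)
    (m : ℝ) (hm : m = (ν Q).toReal) (hmpos : 0 < m)
    (d : ℝ) (hd : d = Metric.diam Q)
    (b : ℂ) (hb : b = (1 / m : ℝ) • ∫ ζ in Q, ζ ∂ν)
    (ζ' : ℂ) (hζ' : ζ' ∈ Q)
    (z : ℂ) (r : ℝ) (hr : r = Metric.infDist z Q) (hrpos : 0 < r) :
    |(∫ ζ in Q, Real.log (‖z - ζ‖) ∂ν) - m * Real.log (‖z - ζ'‖)|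
      ≤ m * ‖b - ζ'‖ / r + m * d ^ 2 / r ^ 2 := by
  have Qm : MeasurableSet Q := hQc.isClosed.measurableSet
  have hνQ : ν Q < ⊤ := measure_lt_top ν Q
  have hd0 : 0 ≤ d := hd ▸ Metric.diam_nonneg
  have hrle : ∀ ζ ∈ Q, r ≤ ‖z - ζ‖ := by
    intro ζ hζ
    have h := Metric.infDist_le_dist_of_mem (x := z) hζ
    rw [Complex.dist_eq] at h
    rw [hr]; exact h
  have hB : r ≤ ‖z - ζ'‖ := hrle ζ' hζ'
  have hcpos : 0 < ‖z - ζ'‖ := lt_of_lt_of_le hrpos hB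
  have hcne : z - ζ' ≠ 0 := by
    intro h; rw [h] at hcpos; simp at hcpos
  have hBub : ‖z - ζ'‖ ≤ r + d := by
    obtain ⟨p, hp, hpd⟩ := hQc.exists_infDist_eq_dist hQne z
    have h1 : dist z ζ' ≤ dist z p + dist p ζ' := dist_triangle z p ζ'
    have h2 : dist p ζ' ≤ d := hd ▸ Metric.dist_le_diam_of_mem hQc.isBounded hp hζ'
    rw [Complex.dist_eq] at h1
    have h3 : dist z p = r := by rw [hr, hpd]
    linarith
  -- pointwise bound
  have hpt : ∀ ζ ∈ Q, |Real.log (‖z - ζ‖) - Real.log (‖z - ζ'‖)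
      - ((ζ' - ζ)/(z - ζ')).re| ≤ d^2/r^2 := by
    intro ζ hζ
    have hA : r ≤ ‖z - ζ‖ := hrle ζ hζ
    have hApos : 0 < ‖z - ζ‖ := lt_of_lt_of_le hrpos hA
    have h1u : (1:ℂ) + (ζ' - ζ)/(z - ζ') = (z - ζ)/(z - ζ') := by
      field_simp
      ring
    have habs1u : ‖(1:ℂ) + (ζ' - ζ)/(z - ζ')‖
        = ‖z - ζ‖ / ‖z - ζ'‖ := by rw [h1u, norm_div]
    have ht : 0 ≤ d/r := div_nonneg hd0 hrpos.le
    have habs_le : ‖ζ' - ζ‖ ≤ d := by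
      have := Metric.dist_le_diam_of_mem hQc.isBounded hζ' hζ
      rw [Complex.dist_eq] at this
      rw [hd]; exact this
    have hu_le : ‖(ζ' - ζ)/(z - ζ')‖ ≤ d/r := by
      rw [norm_div]
      exact div_le_div₀ hd0 habs_le hrpos hB
    have h1u_ge : 1/(1 + d/r) ≤ ‖(1:ℂ) + (ζ' - ζ)/(z - ζ')‖ := by
      rw [habs1u]
      have he : 1 + d/r = (r + d)/r := by field_simp
      rw [he, one_div_div, div_le_div_iff₀ (by linarith) hcpos]
      nlinarith [hA, hBub]
    have hk := key_pt (d/r) ht ((ζ' - ζ)/(z - ζ')) hu_le h1u_ge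
    rw [habs1u, Real.log_div (ne_of_gt hApos) (ne_of_gt hcpos), div_pow] at hk
    exact hk
  -- integrability
  have hcont : ContinuousOn (fun ζ => Real.log (‖z - ζ‖)) Q := by
    apply ContinuousOn.log
      ((continuous_norm.comp (continuous_const.sub continuous_id)).continuousOn)
    intro ζ hζ
    exact ne_of_gt (lt_of_lt_of_le hrpos (hrle ζ hζ))
  have hint1 : IntegrableOn (fun ζ => Real.log (‖z - ζ‖)) Q ν :=
    hcont.integrableOn_compact hQc
  have hint2 : IntegrableOn (fun ζ : ℂ => ζ) Q ν :=
    continuous_id.continuousOn.integrableOn_compact hQc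
  have hint4 : IntegrableOn (fun ζ : ℂ => (ζ' - ζ)/(z - ζ')) Q ν :=
    (Continuous.continuousOn (by fun_prop)).integrableOn_compact hQc
  have hint3 : IntegrableOn (fun ζ : ℂ => ((ζ' - ζ)/(z - ζ')).re) Q ν :=
    (Continuous.continuousOn (by fun_prop)).integrableOn_compact hQc
  have hintL : IntegrableOn (fun _ : ℂ => Real.log (‖z - ζ'‖)) Q ν :=
    integrableOn_const hνQ.ne
  have hmQ : (ν Q).toReal = m := hm.symm
  -- barycenter
  have hIζ : (∫ ζ in Q, ζ ∂ν) = m • b := by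
    rw [hb, smul_smul, mul_one_div, div_self (ne_of_gt hmpos), one_smul]
  have hIg : (∫ ζ in Q, ((ζ' - ζ)/(z - ζ')).re ∂ν)
      = (((m : ℝ) • (ζ' - b))/(z - ζ')).re := by
    have hre := integral_re (𝕜 := ℂ) hint4
    simp only [RCLike.re_to_complex] at hre
    rw [hre]
    congr 1
    rw [integral_div, integral_sub (integrableOn_const (C := ζ') hνQ.ne) hint2,
      setIntegral_const, hIζ, measureReal_def, hmQ, ← smul_sub]
  -- bound on ∫ g
  have hgbound : |∫ ζ in Q, ((ζ' - ζ)/(z - ζ')).re ∂ν| ≤ m * ‖b - ζ'‖ / r := by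
    rw [hIg]
    have h1 : |(((m : ℝ) • (ζ' - b))/(z - ζ')).re|
        ≤ ‖((m : ℝ) • (ζ' - b))/(z - ζ')‖ := Complex.abs_re_le_norm _
    rw [norm_div] at h1
    have h2 : ‖(m : ℝ) • (ζ' - b)‖ = m * ‖b - ζ'‖ := by
      rw [Complex.real_smul, norm_mul, Complex.norm_real, Real.norm_of_nonneg hmpos.le,
        norm_sub_rev]
    rw [h2] at h1
    refine le_trans h1 ?_
    exact div_le_div_of_nonneg_left (by positivity) hrpos hB
  -- main decomposition
  have hsplit : (∫ ζ in Q, Real.log (‖z - ζ‖) ∂ν)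
      - m * Real.log (‖z - ζ'‖)
      = (∫ ζ in Q, (Real.log (‖z - ζ‖) - Real.log (‖z - ζ'‖)
          - ((ζ' - ζ)/(z - ζ')).re) ∂ν)
        + (∫ ζ in Q, ((ζ' - ζ)/(z - ζ')).re ∂ν) := by
    have hsub : IntegrableOn (fun ζ => Real.log (‖z - ζ‖)
        - Real.log (‖z - ζ'‖)) Q ν := hint1.sub hintL
    rw [integral_sub hsub hint3, integral_sub hint1 hintL,
      setIntegral_const, measureReal_def, hmQ, smul_eq_mul]
    ring
  have hbound1 : |∫ ζ in Q, (Real.log (‖z - ζ‖) - Real.log (‖z - ζ'‖)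
      - ((ζ' - ζ)/(z - ζ')).re) ∂ν| ≤ (d^2/r^2) * m := by
    have := norm_setIntegral_le_of_norm_le_const (μ := ν) (C := d^2/r^2) hνQ
      (f := fun ζ => Real.log (‖z - ζ‖) - Real.log (‖z - ζ'‖)
          - ((ζ' - ζ)/(z - ζ')).re)
      (fun x hx => by rw [Real.norm_eq_abs]; exact hpt x hx)
    rw [Real.norm_eq_abs, measureReal_def, hmQ] at this
    exact this
  rw [hsplit]
  calc |(∫ ζ in Q, (Real.log (‖z - ζ‖) - Real.log (‖z - ζ'‖)
          - ((ζ' - ζ)/(z - ζ')).re) ∂ν) + (∫ ζ in Q, ((ζ' - ζ)/(z - ζ')).re ∂ν)|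
      ≤ |∫ ζ in Q, (Real.log (‖z - ζ‖) - Real.log (‖z - ζ'‖)
          - ((ζ' - ζ)/(z - ζ')).re) ∂ν| + |∫ ζ in Q, ((ζ' - ζ)/(z - ζ')).re ∂ν| := abs_add_le _ _
  _ ≤ (d^2/r^2) * m + m * ‖b - ζ'‖ / r := add_le_add hbound1 hgbound
  _ = m * ‖b - ζ'‖ / r + m * d ^ 2 / r ^ 2 := by ring
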